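/- arXiv:0805.3305 — 2 statements merged into one kernel-verified Lean document; each statement's English description precedes it below -/
import Mathlib

section
/- Let V be a finite set of n elements and U_1, ..., U_r subsets of V. Then there exists an index j such that r · (sum over i of |U_i ∩ U_j|) ≥ (sum over i of |U_i|)^2 / n. (Cauchy–Schwarz form of the intersection lemma.) -/
open Finset

theorem stmt_1 {α : Type*} [DecidableEq α] (V : Finset α) (n : ℕ) (hV : V.card = n)
    (hn : 0 < n) (r : ℕ) (hr : 1 ≤ r)
    (U : Fin r → Finset α) (hU : ∀ i, U i ⊆ V) :
    ∃ j : Fin r, (∑ i, ((U i).card : ℝ)) ^ 2 / (n : ℝ) ≤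
      (r : ℝ) * ∑ i, ((U i ∩ U j).card : ℝ) := by
  set f : α → ℝ := fun v => ∑ i : Fin r, if v ∈ U i then (1:ℝ) else 0 with hf
  have hcard : ∀ i, ((U i).card : ℝ) = ∑ v ∈ V, if v ∈ U i then (1:ℝ) else 0 := by
    intro i
    rw [Finset.sum_ite_mem, Finset.inter_eq_right.mpr (hU i)]
    simp
  have hinter : ∀ i j, ((U i ∩ U j).card : ℝ) =
      ∑ v ∈ V, (if v ∈ U i then (1:ℝ) else 0) * (if v ∈ U j then (1:ℝ) else 0) := by
    intro i j
    have h : ((U i ∩ U j).card : ℝ) = ∑ v ∈ V, if v ∈ U i ∩ U j then (1:ℝ) else 0 := by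
      rw [Finset.sum_ite_mem,
        Finset.inter_eq_right.mpr ((Finset.inter_subset_left).trans (hU i))]
      simp
    rw [h]
    refine Finset.sum_congr rfl fun v _ => ?_
    by_cases h1 : v ∈ U i <;> by_cases h2 : v ∈ U j <;>
      simp [h1, h2, Finset.mem_inter]
  have hsum1 : ∑ i, ((U i).card : ℝ) = ∑ v ∈ V, f v := by
    simp only [hcard]
    rw [Finset.sum_comm]
  have hsum2 : ∑ j, ∑ i, ((U i ∩ U j).card : ℝ) = ∑ v ∈ V, (f v) ^ 2 := by
    calc ∑ j, ∑ i, ((U i ∩ U j).card : ℝ)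
        = ∑ j : Fin r, ∑ i : Fin r, ∑ v ∈ V,
            (if v ∈ U i then (1:ℝ) else 0) * (if v ∈ U j then (1:ℝ) else 0) := by
          simp only [hinter]
      _ = ∑ j : Fin r, ∑ v ∈ V, ∑ i : Fin r,
            (if v ∈ U i then (1:ℝ) else 0) * (if v ∈ U j then (1:ℝ) else 0) :=
          Finset.sum_congr rfl fun j _ => Finset.sum_comm
      _ = ∑ v ∈ V, ∑ j : Fin r, ∑ i : Fin r,
            (if v ∈ U i then (1:ℝ) else 0) * (if v ∈ U j then (1:ℝ) else 0) :=
          Finset.sum_comm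
      _ = ∑ v ∈ V, (f v) ^ 2 := by
          refine Finset.sum_congr rfl fun v _ => ?_
          rw [hf, sq, Finset.sum_mul_sum]
          exact Finset.sum_comm
  have key : (∑ i, ((U i).card : ℝ)) ^ 2 ≤ (n : ℝ) * ∑ j, ∑ i, ((U i ∩ U j).card : ℝ) := by
    rw [hsum1, hsum2, ← hV]
    exact_mod_cast sq_sum_le_card_mul_sum_sq (s := V) (f := f)
  have hrpos : (0:ℝ) < r := by exact_mod_cast hr
  have hne : (Finset.univ : Finset (Fin r)).Nonempty :=
    Finset.univ_nonempty_iff.mpr (Fin.pos_iff_nonempty.mp hr)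
  set T : Fin r → ℝ := fun j => ∑ i, ((U i ∩ U j).card : ℝ) with hT
  have havg : ∑ j : Fin r, (∑ k, T k) / r ≤ ∑ j : Fin r, T j := by
    rw [Finset.sum_const, Finset.card_univ, Fintype.card_fin, nsmul_eq_mul,
      mul_div_cancel₀ _ (ne_of_gt hrpos)]
  obtain ⟨j, -, hj⟩ := Finset.exists_le_of_sum_le hne havg
  refine ⟨j, ?_⟩
  have h1 : (∑ i, ((U i).card : ℝ)) ^ 2 / n ≤ ∑ k, T k := by
    rw [div_le_iff₀ (by exact_mod_cast hn)]
    rw [mul_comm]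
    exact key
  have h2 : ∑ k, T k ≤ r * T j := by
    rw [div_le_iff₀ hrpos] at hj
    linarith [hj]
  exact h1.trans h2
end

section
/- If X is a finite nonempty subset of an additive abelian group with |X + X| ≤ C·|X|, then for every positive integer k, the k-fold sumset kX = X + X + ... + X satisfies |kX| ≤ C^k · |X|. -/
open Finset Pointwise

theorem stmt_2 {G : Type*} [AddCommGroup G] [DecidableEq G]
    (X : Finset G) (hX : X.Nonempty) (C : ℝ) (hC : 1 ≤ C)
    (hXX : ((X + X).card : ℝ) ≤ C * X.card) :
    ∀ k : ℕ, 0 < k → ((k • X).card : ℝ) ≤ C ^ k * X.card := by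
  intro k _
  have h := Finset.pluennecke_ruzsa_inequality_nsmul_add hX X k
  have hX0 : (0 : ℝ) < X.card := by exact_mod_cast hX.card_pos
  rw [← NNRat.cast_le (K := ℝ)] at h
  push_cast at h
  refine h.trans ?_
  gcongr
  rw [div_le_iff₀ hX0]; exact hXX
end
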